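/- Let B be the base family of a matroid on ground set E, and X, Y ∈ B. Let R ⊆ Y\X be a random subset with each element included independently with probability p. Then there exists a map T : 2^{Y\X} → 2^{X\Y} such that X ∪ R \ T(R) ∈ B for every R ⊆ Y\X, and P(x ∈ T(R)) ≤ p for every x ∈ X\Y. That is, the base family admits a (p,p)-uniform exchange map with S(R) = R. -/

import Mathlib

open Finset
/-- Counting `k+1`-subsets of `s` containing a fixed element `y ∈ s`. -/
lemma count_mem_powersetCard {α : Type*} [DecidableEq α] (s : Finset α) (y : α)
    (hy : y ∈ s) (k : ℕ) :
    ((s.powersetCard (k+1)).filter fun r => y ∈ r).card = (s.card - 1).choose k := by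
  rw [show s.card - 1 = (s.erase y).card from (card_erase_of_mem hy).symm,
    ← Finset.card_powersetCard k (s.erase y)]
  refine Finset.card_bij' (fun r _ => r.erase y) (fun b _ => insert y b) ?_ ?_ ?_ ?_
  · intro r hr
    simp only [mem_filter, mem_powersetCard] at hr
    obtain ⟨⟨hsub, hcard⟩, hyr⟩ := hr
    rw [mem_powersetCard]
    constructor
    · intro z hz
      rw [mem_erase] at hz ⊢
      exact ⟨hz.1, hsub hz.2⟩
    · rw [card_erase_of_mem hyr, hcard]
      omega
  · intro b hb
    rw [mem_powersetCard] at hb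
    have hyb : y ∉ b := fun h => (mem_erase.mp (hb.1 h)).1 rfl
    rw [mem_filter, mem_powersetCard]
    refine ⟨⟨?_, ?_⟩, mem_insert_self _ _⟩
    · intro z hz
      rcases mem_insert.mp hz with rfl | h
      · exact hy
      · exact (erase_subset _ _) (hb.1 h)
    · rw [card_insert_of_notMem hyb, hb.2]
  · intro r hr
    simp only [mem_filter] at hr
    exact insert_erase hr.2
  · intro b hb
    rw [mem_powersetCard] at hb
    have hyb : y ∉ b := fun h => (mem_erase.mp (hb.1 h)).1 rfl
    exact erase_insert hyb

/-- Transfer a filter-count along the equivalence `{r // r ∈ s} ≃ Fin s.card`. -/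
lemma filterFinCard {β : Type*} (s : Finset β) (e : {r // r ∈ s} ≃ Fin s.card)
    (P : β → Prop) [DecidablePred P] :
    (Finset.univ.filter fun i => P (e.symm i).1).card = (s.filter P).card := by
  refine Finset.card_bij' (fun i _ => ((e.symm i).1 : β))
    (fun r hr => e ⟨r, (Finset.mem_filter.mp hr).1⟩) ?_ ?_ ?_ ?_
  · intro i hi
    rw [mem_filter]
    exact ⟨(e.symm i).2, (mem_filter.mp hi).2⟩
  · intro r hr
    rw [mem_filter]
    refine ⟨mem_univ _, ?_⟩
    simp [(mem_filter.mp hr).2]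
  · intro i _
    simp
  · intro r hr
    simp


/-- The base family of a matroid admits a `(p,p)`-uniform exchange map with `S(R) = R`.
The matroid base family `B` is given via its generalized Rota-exchange property
(hypothesis `hRota`). `R ⊆ Y \ X` is random with each element included independently
with probability `p`; the marginal `P(x ∈ T(R))` is written explicitly as a sum of
Bernoulli-product weights over the powerset of `Y \ X`. -/
theorem matroid_base_uniform_exchange_map {E : Type*} [DecidableEq E]
    (B : Set (Finset E)) (X Y : Finset E) (hX : X ∈ B) (hY : Y ∈ B)
    (hRota : ∀ (n q : ℕ) (A : Fin n → Finset E),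
      (∀ i, A i ⊆ Y \ X) →
      (∀ y ∈ Y \ X, (Finset.univ.filter fun i : Fin n => y ∈ A i).card = q) →
      ∃ Bs : Fin n → Finset E,
        (∀ i, Bs i ⊆ X \ Y ∧ (X ∪ A i) \ Bs i ∈ B) ∧
        (∀ x ∈ X \ Y, (Finset.univ.filter fun i : Fin n => x ∈ Bs i).card = q))
    (p : ℝ) (hp0 : 0 < p) (hp1 : p < 1) :
    ∃ T : Finset E → Finset E,
      (∀ R ⊆ Y \ X, T R ⊆ X \ Y ∧ (X ∪ R) \ T R ∈ B) ∧
      (∀ x ∈ X \ Y,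
        ∑ r ∈ (Y \ X).powerset,
          p ^ r.card * (1 - p) ^ ((Y \ X).card - r.card) *
            (if x ∈ T r then 1 else 0) ≤ p) := by
  classical
  set D : Finset E := Y \ X with hD
  set m : ℕ := D.card with hm
  -- Key: for each cardinality level `k`, a feasible exchange map with balanced coverage.
  have key : ∀ k : ℕ, ∃ t : Finset E → Finset E,
      (∀ r ∈ D.powersetCard k, t r ⊆ X \ Y ∧ (X ∪ r) \ t r ∈ B) ∧
      (∀ x ∈ X \ Y, (((D.powersetCard k).filter fun r => x ∈ t r).card : ℕ)
          ≤ if k = 0 then 0 else (m - 1).choose (k - 1)) := by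
    intro k
    match k with
    | 0 =>
      refine ⟨fun _ => ∅, ?_, ?_⟩
      · intro r hr
        rw [Finset.powersetCard_zero, Finset.mem_singleton] at hr
        subst hr
        constructor
        · exact Finset.empty_subset _
        · simpa using hX
      · intro x _
        simp
    | (k+1) =>
      set s : Finset (Finset E) := D.powersetCard (k+1) with hs
      let e : {r // r ∈ s} ≃ Fin s.card := Fintype.equivFinOfCardEq (Fintype.card_coe s)
      set A : Fin s.card → Finset E := fun i => ((e.symm i).1 : Finset E) with hA
      have hAsub : ∀ i, A i ⊆ Y \ X := fun i =>
        (Finset.mem_powersetCard.mp (e.symm i).2).1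
      have hcov : ∀ y ∈ Y \ X,
          (Finset.univ.filter fun i => y ∈ A i).card = (m - 1).choose k := by
        intro y hy
        rw [filterFinCard s e (fun r => y ∈ r), hs, count_mem_powersetCard D y hy k]
      obtain ⟨Bs, hBs1, hBs2⟩ := hRota s.card ((m - 1).choose k) A hAsub hcov
      refine ⟨fun r => if h : r ∈ s then Bs (e ⟨r, h⟩) else ∅, ?_, ?_⟩
      · intro r hr
        have hA' : A (e ⟨r, hr⟩) = r := by
          simp [hA]
        have := hBs1 (e ⟨r, hr⟩)
        rw [hA'] at this
        simpa [dif_pos hr] using this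
      · intro x hx
        rw [if_neg (Nat.succ_ne_zero k)]
        have hcard : (s.filter fun r => x ∈ (if h : r ∈ s then Bs (e ⟨r, h⟩) else ∅)).card
            = (Finset.univ.filter fun i => x ∈ Bs i).card := by
          rw [← filterFinCard s e (fun r => x ∈ (if h : r ∈ s then Bs (e ⟨r, h⟩) else ∅))]
          congr 1
          apply Finset.filter_congr
          intro i _
          have hmem : ((e.symm i).1 : Finset E) ∈ s := (e.symm i).2
          simp only [dif_pos hmem]
          rw [show (⟨((e.symm i).1 : Finset E), hmem⟩ : {r // r ∈ s}) = e.symm i from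
            Subtype.ext rfl, Equiv.apply_symm_apply]
        rw [Nat.succ_sub_one]
        rw [hcard, hBs2 x hx]
    -- choose the level maps
  choose t ht1 ht2 using key
  refine ⟨fun r => t r.card r, ?_, ?_⟩
  · intro R hR
    exact ht1 R.card R (Finset.mem_powersetCard.mpr ⟨hR, rfl⟩)
  · intro x hx
    have hsplit := Finset.powerset_card_disjiUnion D
    rw [show Y \ X = D from rfl, show (Y \ X).card = m from rfl] at *
    rw [hsplit]
    erw [Finset.sum_disjiUnion]
    have hinner : ∀ k ∈ Finset.range (m + 1),
        (∑ r ∈ D.powersetCard k, p ^ r.card * (1 - p) ^ (m - r.card) *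
            (if x ∈ t r.card r then 1 else 0))
          ≤ (if k = 0 then 0 else p ^ k * (1 - p) ^ (m - k) * ((m-1).choose (k-1) : ℝ)) := by
      intro k _
      have hterm : ∀ r ∈ D.powersetCard k,
          p ^ r.card * (1 - p) ^ (m - r.card) * (if x ∈ t r.card r then 1 else 0)
            = p ^ k * (1 - p) ^ (m - k) * (if x ∈ t k r then 1 else 0) := by
        intro r hr
        have hc : r.card = k := (Finset.mem_powersetCard.mp hr).2
        rw [hc]
      rw [Finset.sum_congr rfl hterm, ← Finset.mul_sum, Finset.sum_boole]
      have hb := ht2 k x hx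
      have hnonneg : (0:ℝ) ≤ p ^ k * (1 - p) ^ (m - k) :=
        mul_nonneg (pow_nonneg hp0.le _) (pow_nonneg (by linarith) _)
      rcases Nat.eq_zero_or_pos k with rfl | hk
      · simp only [if_pos rfl] at hb ⊢
        have : ((D.powersetCard 0).filter fun r => x ∈ t 0 r).card = 0 :=
          Nat.le_zero.mp (by simpa using hb)
        rw [this]
        simp
      · rw [if_neg hk.ne'] at hb ⊢
        calc p ^ k * (1 - p) ^ (m - k) *
              (((D.powersetCard k).filter fun r => x ∈ t k r).card : ℝ)
            ≤ p ^ k * (1 - p) ^ (m - k) * ((m-1).choose (k-1) : ℝ) := by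
              apply mul_le_mul_of_nonneg_left _ hnonneg
              exact_mod_cast hb
          _ = _ := rfl
    refine le_trans (Finset.sum_le_sum hinner) ?_
    clear_value m
    rcases Nat.eq_zero_or_pos m with hm0 | hmpos
    · rw [hm0]
      simp [hp0.le]
    · obtain ⟨m', rfl⟩ : ∃ m', m = m' + 1 := ⟨m - 1, by omega⟩
      rw [Finset.sum_range_succ', if_pos rfl, add_zero]
      have hbin : ∑ j ∈ Finset.range (m' + 1),
          p ^ (j+1) * (1 - p) ^ (m' - j) * ((m'.choose j : ℕ) : ℝ) = p := by
        have := add_pow p (1 - p) m'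
        have h1 : (p + (1 - p)) ^ m' = 1 := by
          rw [show p + (1 - p) = 1 by ring, one_pow]
        rw [h1] at this
        calc ∑ j ∈ Finset.range (m' + 1),
              p ^ (j+1) * (1 - p) ^ (m' - j) * ((m'.choose j : ℕ) : ℝ)
            = p * ∑ j ∈ Finset.range (m' + 1),
              p ^ j * (1 - p) ^ (m' - j) * ((m'.choose j : ℕ) : ℝ) := by
              rw [Finset.mul_sum]
              apply Finset.sum_congr rfl
              intro j _
              ring
          _ = p * 1 := by rw [← this]
          _ = p := mul_one p
      refine le_of_eq ?_
      refine ((Finset.sum_congr rfl fun j _ => ?_).trans hbin)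
      simp [Nat.succ_sub_succ]
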